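/- Every symmetric r² × r² matrix S over F₂ can be written as a sum S = Σ_{i=1}^{a} (M_i ⊗ M_iᵀ) τ with M_i ∈ M_r(2) and a ≤ r² + 1, where τ is the tensor-swap permutation matrix on F₂^{r²}. -/

import Mathlib

open Matrix Kronecker

def tau (r : ℕ) : Matrix (Fin r × Fin r) (Fin r × Fin r) (ZMod 2) :=
  fun p q => if p.1 = q.2 ∧ p.2 = q.1 then 1 else 0

namespace Stmt17Aux

variable {ι : Type*} [Fintype ι] [DecidableEq ι]

lemma z2_mul_self : ∀ a : ZMod 2, a * a = a := by decide
lemma z2_add_self : ∀ a : ZMod 2, a + a = 0 := by decide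
lemma z2_cases : ∀ a : ZMod 2, a = 0 ∨ a = 1 := by decide
lemma z2_add_cancel : ∀ a b : ZMod 2, a + (b + a) = b := by decide

lemma vecMulVec_mulVec (v w y : ι → ZMod 2) :
    (Matrix.vecMulVec v w) *ᵥ y = (w ⬝ᵥ y) • v := by
  ext k
  simp only [Matrix.mulVec, Matrix.vecMulVec_apply, dotProduct, Pi.smul_apply,
    smul_eq_mul, Finset.sum_mul, Finset.mul_sum]
  refine Finset.sum_congr rfl fun j _ => by ring

lemma vecMulVec_symm (v : ι → ZMod 2) : (Matrix.vecMulVec v v)ᵀ = Matrix.vecMulVec v v := by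
  ext i j; simp [Matrix.vecMulVec_apply, mul_comm]

/-- rank 0 implies zero matrix -/
lemma eq_zero_of_rank_eq_zero {S : Matrix ι ι (ZMod 2)} (h : S.rank = 0) : S = 0 := by
  have hrange : LinearMap.range S.mulVecLin = ⊥ := by
    have := Submodule.finrank_eq_zero (R := ZMod 2) (S := LinearMap.range S.mulVecLin)
    exact this.mp h
  ext i j
  have : S *ᵥ Pi.single j 1 = 0 := by
    have : S.mulVecLin (Pi.single j 1) ∈ (⊥ : Submodule (ZMod 2) (ι → ZMod 2)) :=
      hrange ▸ LinearMap.mem_range_self _ _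
    simpa [Matrix.mulVecLin_apply] using this
  have := congrFun this i
  simpa [Matrix.mulVec_single] using this

/-- The pivot step. -/
lemma pivot {S : Matrix ι ι (ZMod 2)} (hsym : Sᵀ = S) (x : ι → ZMod 2)
    (hQ : x ⬝ᵥ (S *ᵥ x) = 1) :
    (S + Matrix.vecMulVec (S *ᵥ x) (S *ᵥ x)).rank < S.rank := by
  set v := S *ᵥ x with hv
  set T := S + Matrix.vecMulVec v v with hT
  have hTy : ∀ y, T *ᵥ y = S *ᵥ (y + (v ⬝ᵥ y) • x) := by
    intro y
    rw [Matrix.mulVec_add, Matrix.mulVec_smul]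
    rw [hT, Matrix.add_mulVec, vecMulVec_mulVec]
  have hxv : x ⬝ᵥ v = 1 := hQ
  have hxT : ∀ y, x ⬝ᵥ (T *ᵥ y) = 0 := by
    intro y
    have h1 : x ⬝ᵥ (S *ᵥ y) = v ⬝ᵥ y := by
      rw [Matrix.dotProduct_mulVec, ← Matrix.mulVec_transpose, hsym, ← hv]
    have : T *ᵥ y = S *ᵥ y + (v ⬝ᵥ y) • v := by
      rw [hT, Matrix.add_mulVec, vecMulVec_mulVec]
    rw [this, dotProduct_add, h1, dotProduct_smul, hxv]
    simp [z2_add_self]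
  have hle : LinearMap.range T.mulVecLin ≤ LinearMap.range S.mulVecLin := by
    rintro _ ⟨y, rfl⟩
    exact ⟨y + (v ⬝ᵥ y) • x, by simp only [Matrix.mulVecLin_apply]; exact (hTy y).symm⟩
  have hvS : v ∈ LinearMap.range S.mulVecLin := ⟨x, by simp [Matrix.mulVecLin_apply, hv]⟩
  have hvT : v ∉ LinearMap.range T.mulVecLin := by
    rintro ⟨y, hy⟩
    have h0 : x ⬝ᵥ v = 0 := by
      rw [← hy]; simpa [Matrix.mulVecLin_apply] using hxT y
    rw [hxv] at h0; exact one_ne_zero h0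
  have hlt : LinearMap.range T.mulVecLin < LinearMap.range S.mulVecLin :=
    lt_of_le_of_ne hle (fun h => hvT (h ▸ hvS))
  exact Submodule.finrank_lt_finrank_of_lt hlt

/-- Part 1: non-alternating case, rank bound. -/
lemma part1 : ∀ ρ : ℕ, ∀ S : Matrix ι ι (ZMod 2), Sᵀ = S → S.rank ≤ ρ →
    (∃ i, S i i = 1) →
    ∃ a : ℕ, a ≤ ρ ∧ ∃ v : Fin a → ι → ZMod 2,
      S = ∑ k, Matrix.vecMulVec (v k) (v k) := by
  intro ρ
  induction ρ with
  | zero =>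
    intro S hsym hrank ⟨i, hi⟩
    exfalso
    have : S = 0 := eq_zero_of_rank_eq_zero (Nat.le_zero.mp hrank)
    rw [this] at hi
    simpa using hi
  | succ ρ ih =>
    intro S hsym hrank ⟨i, hi⟩
    -- common continuation once we found x with Q(x)=1 and S*x ≠ diagonal
    have cont : ∀ x : ι → ZMod 2, x ⬝ᵥ (S *ᵥ x) = 1 → (S *ᵥ x) ≠ (fun k => S k k) →
        ∃ a : ℕ, a ≤ ρ + 1 ∧ ∃ v : Fin a → ι → ZMod 2,
          S = ∑ k, Matrix.vecMulVec (v k) (v k) := by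
      intro x hQ hvd
      set v := S *ᵥ x with hv
      set T := S + Matrix.vecMulVec v v with hT
      have hTsym : Tᵀ = T := by rw [hT, Matrix.transpose_add, hsym, vecMulVec_symm]
      have hTrank : T.rank ≤ ρ := by
        have h := pivot hsym x hQ
        rw [← hv, ← hT] at h
        omega
      have hTdiag : ∃ k, T k k = 1 := by
        have : ∃ k, v k ≠ S k k := by
          by_contra h
          push_neg at h
          exact hvd (funext h)
        obtain ⟨k, hk⟩ := this
        refine ⟨k, ?_⟩
        have : T k k = S k k + v k * v k := by
          simp [hT, Matrix.add_apply, Matrix.vecMulVec_apply]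
        rw [this, z2_mul_self]
        have h2 : ∀ a b : ZMod 2, b ≠ a → a + b = 1 := by decide
        exact h2 _ _ hk
      obtain ⟨a, ha, w, hw⟩ := ih T hTsym hTrank hTdiag
      refine ⟨a + 1, by omega, Fin.cons v w, ?_⟩
      rw [Fin.sum_univ_succ]
      simp only [Fin.cons_zero, Fin.cons_succ]
      rw [← hw]
      ext p q
      simp only [Matrix.add_apply, hT, Matrix.add_apply]
      exact (z2_add_cancel _ _).symm
    by_cases hA : ∃ j, S j j = 1 ∧ (S *ᵥ Pi.single j 1) ≠ (fun k => S k k)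
    · obtain ⟨j, hj, hcol⟩ := hA
      refine cont (Pi.single j 1) ?_ hcol
      rw [dotProduct_comm, dotProduct_single]
      rw [Matrix.mulVec_single]
      simpa using hj
    · push_neg at hA
      -- every column at a diagonal-1 position equals the diagonal
      by_cases hB : ∃ j, S j j = 0 ∧ (fun k => S k j) ≠ 0
      · obtain ⟨j, hj0, hcolj⟩ := hB
        have hcoli : S *ᵥ Pi.single i 1 = fun k => S k k := hA i hi
        have hcoli' : ∀ k, S k i = S k k := by
          intro k
          have := congrFun hcoli k
          simpa [Matrix.mulVec_single] using this
        set x := (Pi.single i 1 + Pi.single j 1 : ι → ZMod 2) with hx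
        have hSx : S *ᵥ x = (fun k => S k k) + (fun k => S k j) := by
          rw [hx, Matrix.mulVec_add, Matrix.mulVec_single, Matrix.mulVec_single]
          ext k
          simp [hcoli' k]
        have hSji : S j i = S j j := hcoli' j
        have hSij : S i j = 0 := by
          have h : S i j = S j i := (Matrix.IsSymm.apply hsym i j).symm
          rw [h, hSji, hj0]
        refine cont x ?_ ?_
        · rw [hSx, hx]
          rw [dotProduct_comm]
          simp only [dotProduct_add, dotProduct_single, Pi.add_apply]
          rw [hi, hj0, hSij]
          decide
        · rw [hSx]
          intro h
          apply hcolj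
          ext k
          have := congrFun h k
          simp only [Pi.add_apply] at this
          have h2 : ∀ a b : ZMod 2, a + b = a → b = 0 := by decide
          exact h2 _ _ this
      · push_neg at hB
        -- S = d dᵀ
        set d := (fun k => S k k) with hd
        have hSdd : S = Matrix.vecMulVec d d := by
          ext k l
          rw [Matrix.vecMulVec_apply]
          show S k l = S k k * S l l
          rcases z2_cases (S l l) with h0 | h1
          · have hz : (fun k => S k l) = 0 := hB l h0
            have hz' := congrFun hz k
            simp only [Pi.zero_apply] at hz'
            rw [h0, mul_zero, hz']
          · have hcoll : S *ᵥ Pi.single l 1 = fun k => S k k := hA l h1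
            have h2 := congrFun hcoll k
            simp [Matrix.mulVec_single] at h2
            rw [h1, mul_one]
            exact h2
        refine ⟨1, by omega, fun _ => d, ?_⟩
        rw [Fin.sum_univ_one]
        exact hSdd

/-- Part 2: every symmetric binary matrix is a sum of at most card+1 squares. -/
lemma part2 (S : Matrix ι ι (ZMod 2)) (hsym : Sᵀ = S) :
    ∃ a : ℕ, a ≤ Fintype.card ι + 1 ∧ ∃ v : Fin a → ι → ZMod 2,
      S = ∑ k, Matrix.vecMulVec (v k) (v k) := by
  by_cases hd : ∃ i, S i i = 1
  · obtain ⟨a, ha, hv⟩ := part1 (Fintype.card ι) S hsym (Matrix.rank_le_card_width S) hd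
    exact ⟨a, by omega, hv⟩
  · push_neg at hd
    have hd0 : ∀ i, S i i = 0 := by
      intro i
      rcases z2_cases (S i i) with h | h
      · exact h
      · exact absurd h (hd i)
    by_cases hS0 : S = 0
    · exact ⟨0, by omega, fun k => 0, by simp [hS0]⟩
    · have : ∃ p q, S p q = 1 := by
        by_contra h
        push_neg at h
        apply hS0
        ext p q
        rcases z2_cases (S p q) with h0 | h1
        · simp [h0]
        · exact absurd h1 (h p q)
      obtain ⟨p, q, hpq⟩ := this
      set v := (fun k => S k q) with hv
      set T := S + Matrix.vecMulVec v v with hT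
      have hTsym : Tᵀ = T := by rw [hT, Matrix.transpose_add, hsym, vecMulVec_symm]
      have hTdiag : ∃ k, T k k = 1 := by
        refine ⟨p, ?_⟩
        have : T p p = S p p + v p * v p := by simp [hT, Matrix.vecMulVec_apply]
        rw [this, z2_mul_self, hd0, hv]
        simpa using hpq
      obtain ⟨a, ha, w, hw⟩ := part1 (Fintype.card ι) T hTsym (Matrix.rank_le_card_width T) hTdiag
      refine ⟨a + 1, by omega, Fin.cons v w, ?_⟩
      rw [Fin.sum_univ_succ]
      simp only [Fin.cons_zero, Fin.cons_succ]
      rw [← hw]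
      ext a b
      simp only [Matrix.add_apply, hT, Matrix.add_apply]
      exact (z2_add_cancel _ _).symm

end Stmt17Aux

theorem stmt_17 (r : ℕ) (S : Matrix (Fin r × Fin r) (Fin r × Fin r) (ZMod 2))
    (hS : S.IsSymm) :
    ∃ a : ℕ, a ≤ r ^ 2 + 1 ∧ ∃ M : Fin a → Matrix (Fin r) (Fin r) (ZMod 2),
      S = ∑ i : Fin a, (M i ⊗ₖ (M i)ᵀ) * tau r := by
  classical
  set R : Matrix (Fin r × Fin r) (Fin r × Fin r) (ZMod 2) :=
    fun x y => S (x.1, y.2) (y.1, x.2) with hR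
  have hRsym : Rᵀ = R := by
    ext x y
    show R y x = R x y
    rw [hR]
    show S (y.1, x.2) (x.1, y.2) = S (x.1, y.2) (y.1, x.2)
    exact (hS.apply (y.1, x.2) (x.1, y.2)).symm
  obtain ⟨a, ha, v, hv⟩ := Stmt17Aux.part2 R hRsym
  have hcard : Fintype.card (Fin r × Fin r) = r ^ 2 := by
    simp [Fintype.card_prod, pow_two]
  refine ⟨a, by omega, fun k => Matrix.of (fun i j => v k (i, j)), ?_⟩
  ext p q
  have hterm : ∀ (M : Matrix (Fin r) (Fin r) (ZMod 2)),
      ((M ⊗ₖ Mᵀ) * tau r) p q = M p.1 q.2 * M q.1 p.2 := by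
    intro M
    rw [Matrix.mul_apply]
    rw [Finset.sum_eq_single ((q.2, q.1) : Fin r × Fin r)]
    · simp [tau, Matrix.kroneckerMap_apply, Matrix.transpose_apply]
    · intro s _ hs
      have : ¬(s.1 = q.2 ∧ s.2 = q.1) := by
        rintro ⟨h1, h2⟩
        exact hs (Prod.ext h1 h2)
      simp [tau, this]
    · simp
  rw [Matrix.sum_apply]
  have hSpq : S p q = R (p.1, q.2) (q.1, p.2) := by rw [hR]
  rw [hSpq, hv, Matrix.sum_apply]
  refine Finset.sum_congr rfl fun k _ => ?_
  rw [hterm]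
  simp [Matrix.vecMulVec_apply, Matrix.of_apply]
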